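/- arXiv:0901.1898 — 2 statements merged into one kernel-verified Lean document; each statement's English description precedes it below -/
import Mathlib

section
/- Let A : ℂ^{m×n} → ℂ^p be a linear operator and let δ ≥ 0 be a constant such that (1 − δ)‖X‖_F² ≤ ‖A X‖₂² ≤ (1 + δ)‖X‖_F² for every matrix X ∈ ℂ^{m×n} with rank(X) ≤ r. If X, Y ∈ ℂ^{m×n} satisfy ⟨X, Y⟩ = tr(Yᴴ X) = 0 and rank(X) + rank(Y) ≤ r, then |⟨A X, A Y⟩_{ℂ^p}| ≤ √2 · δ · ‖X‖_F · ‖Y‖_F. -/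
open scoped InnerProductSpace
open Matrix

/-- The Frobenius inner product on `ℂ^{m×n}`: `⟨X, Y⟩ = tr(Yᴴ X)`. -/
noncomputable def frobInner {m n : ℕ} (X Y : Matrix (Fin m) (Fin n) ℂ) : ℂ :=
  (Yᴴ * X).trace

/-- The Frobenius norm `‖X‖_F = √⟨X, X⟩`. -/
noncomputable def frobNorm {m n : ℕ} (X : Matrix (Fin m) (Fin n) ℂ) : ℝ :=
  Real.sqrt (frobInner X X).re

namespace FrobAux

variable {m n : ℕ}

lemma frobInner_eq (X Y : Matrix (Fin m) (Fin n) ℂ) :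
    frobInner X Y = ∑ j, ∑ i, (starRingEnd ℂ) (Y i j) * X i j := by
  simp [frobInner, Matrix.trace, Matrix.diag, Matrix.mul_apply, Matrix.conjTranspose_apply]

lemma frobInner_self_re (X : Matrix (Fin m) (Fin n) ℂ) :
    (frobInner X X).re = ∑ j, ∑ i, Complex.normSq (X i j) := by
  rw [frobInner_eq, Complex.re_sum]
  refine Finset.sum_congr rfl fun j _ => ?_
  rw [Complex.re_sum]
  refine Finset.sum_congr rfl fun i _ => ?_
  rw [mul_comm, Complex.mul_conj, Complex.ofReal_re]

lemma frobInner_self_re_nonneg (X : Matrix (Fin m) (Fin n) ℂ) :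
    0 ≤ (frobInner X X).re := by
  rw [frobInner_self_re]
  exact Finset.sum_nonneg fun j _ => Finset.sum_nonneg fun i _ => Complex.normSq_nonneg _

lemma frobNorm_sq (X : Matrix (Fin m) (Fin n) ℂ) :
    frobNorm X ^ 2 = (frobInner X X).re :=
  Real.sq_sqrt (frobInner_self_re_nonneg X)

lemma frobNorm_nonneg (X : Matrix (Fin m) (Fin n) ℂ) : 0 ≤ frobNorm X :=
  Real.sqrt_nonneg _

lemma frobNorm_eq_zero {X : Matrix (Fin m) (Fin n) ℂ} (h : frobNorm X = 0) : X = 0 := by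
  have h2 : (frobInner X X).re = 0 := by
    have := frobNorm_sq X
    rw [h] at this; linarith [this]
  rw [frobInner_self_re] at h2
  ext i j
  have hj := (Finset.sum_eq_zero_iff_of_nonneg (fun j _ => Finset.sum_nonneg fun i _ => Complex.normSq_nonneg _)).mp h2 j
    (Finset.mem_univ j)
  have hi := (Finset.sum_eq_zero_iff_of_nonneg (fun i _ => Complex.normSq_nonneg _)).mp hj i
    (Finset.mem_univ i)
  simpa using Complex.normSq_eq_zero.mp hi

lemma frobInner_conj_symm (X Y : Matrix (Fin m) (Fin n) ℂ) :
    frobInner Y X = (starRingEnd ℂ) (frobInner X Y) := by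
  rw [frobInner_eq, frobInner_eq, map_sum]
  refine Finset.sum_congr rfl fun j _ => ?_
  rw [map_sum]
  refine Finset.sum_congr rfl fun i _ => ?_
  simp [mul_comm]

lemma frobInner_smul_left (c : ℂ) (X Y : Matrix (Fin m) (Fin n) ℂ) :
    frobInner (c • X) Y = c * frobInner X Y := by
  simp [frobInner, Matrix.mul_smul, Matrix.trace_smul]

lemma frobInner_smul_right (c : ℂ) (X Y : Matrix (Fin m) (Fin n) ℂ) :
    frobInner X (c • Y) = (starRingEnd ℂ) c * frobInner X Y := by
  simp [frobInner, Matrix.conjTranspose_smul, Matrix.smul_mul, Matrix.trace_smul]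

lemma frobInner_add_left (X Y Z : Matrix (Fin m) (Fin n) ℂ) :
    frobInner (X + Y) Z = frobInner X Z + frobInner Y Z := by
  simp [frobInner, Matrix.mul_add, Matrix.trace_add]

lemma frobInner_add_right (X Y Z : Matrix (Fin m) (Fin n) ℂ) :
    frobInner X (Y + Z) = frobInner X Y + frobInner X Z := by
  simp [frobInner, Matrix.conjTranspose_add, Matrix.add_mul, Matrix.trace_add]

lemma frobInner_neg_right (X Y : Matrix (Fin m) (Fin n) ℂ) :
    frobInner X (-Y) = -frobInner X Y := by
  simp [frobInner, Matrix.conjTranspose_neg, Matrix.neg_mul, Matrix.trace_neg]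

lemma frobNorm_smul (c : ℂ) (X : Matrix (Fin m) (Fin n) ℂ) :
    frobNorm (c • X) = ‖c‖ * frobNorm X := by
  unfold frobNorm
  rw [frobInner_smul_left, frobInner_smul_right, ← mul_assoc, Complex.mul_conj,
    Complex.re_ofReal_mul, Real.sqrt_mul (Complex.normSq_nonneg c), ← Complex.norm_def]

/-- `‖X + Y‖_F² = ‖X‖_F² + ‖Y‖_F²` for Frobenius-orthogonal `X, Y`. -/
lemma frobNorm_add_sq {X Y : Matrix (Fin m) (Fin n) ℂ} (h : frobInner X Y = 0) :
    frobNorm (X + Y) ^ 2 = frobNorm X ^ 2 + frobNorm Y ^ 2 := by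
  have hYX : frobInner Y X = 0 := by rw [frobInner_conj_symm, h, map_zero]
  rw [frobNorm_sq, frobNorm_sq, frobNorm_sq]
  rw [frobInner_add_left, frobInner_add_right, frobInner_add_right, h, hYX]
  simp

lemma rank_smul_le (c : ℂ) (X : Matrix (Fin m) (Fin n) ℂ) :
    (c • X).rank ≤ X.rank := by
  rcases eq_or_ne c 0 with rfl | hc
  · rw [zero_smul]; simp
  · have : (c • X).mulVecLin = c • X.mulVecLin := by
      ext v i; simp [Matrix.mulVecLin_apply, Matrix.smul_mulVec]
    rw [Matrix.rank, this, LinearMap.range_smul _ _ hc]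
    exact le_rfl

lemma rank_add_le (X Y : Matrix (Fin m) (Fin n) ℂ) :
    (X + Y).rank ≤ X.rank + Y.rank := by
  rw [Matrix.rank, Matrix.rank, Matrix.rank, Matrix.mulVecLin_add]
  refine le_trans (Submodule.finrank_mono ?_) (Submodule.finrank_add_le_finrank_add_finrank _ _)
  rintro x ⟨v, rfl⟩
  exact Submodule.mem_sup.mpr ⟨X.mulVecLin v, ⟨v, rfl⟩, Y.mulVecLin v, ⟨v, rfl⟩, rfl⟩

end FrobAux

open FrobAux in
/-- Key estimate: for orthogonal `X, Y` with small rank sum,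
`|Re ⟪A X, A Y⟫| ≤ δ/2 (‖X‖² + ‖Y‖²)`. -/
lemma re_inner_bound {m n p r : ℕ}
    (A : Matrix (Fin m) (Fin n) ℂ →ₗ[ℂ] EuclideanSpace ℂ (Fin p))
    (δ : ℝ)
    (hRIP : ∀ Z : Matrix (Fin m) (Fin n) ℂ, Z.rank ≤ r →
      (1 - δ) * frobNorm Z ^ 2 ≤ ‖A Z‖ ^ 2 ∧ ‖A Z‖ ^ 2 ≤ (1 + δ) * frobNorm Z ^ 2)
    (X Y : Matrix (Fin m) (Fin n) ℂ)
    (horth : frobInner X Y = 0)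
    (hrank : X.rank + Y.rank ≤ r) :
    |(⟪A X, A Y⟫_ℂ).re| ≤ δ / 2 * (frobNorm X ^ 2 + frobNorm Y ^ 2) := by
  have hnegY : (-Y) = ((-1 : ℂ)) • Y := by simp
  have hrank_neg : (-Y).rank ≤ Y.rank := by rw [hnegY]; exact rank_smul_le _ _
  have hrank1 : (X + Y).rank ≤ r := le_trans (rank_add_le X Y) hrank
  have hrank2 : (X - Y).rank ≤ r := by
    rw [sub_eq_add_neg]
    exact le_trans (rank_add_le X (-Y)) (le_trans (add_le_add_right hrank_neg _) hrank)
  have hnormnegY : frobNorm (-Y) = frobNorm Y := by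
    rw [hnegY, frobNorm_smul]; simp
  have horth' : frobInner X (-Y) = 0 := by rw [frobInner_neg_right, horth, neg_zero]
  have hsum : frobNorm (X + Y) ^ 2 = frobNorm X ^ 2 + frobNorm Y ^ 2 := frobNorm_add_sq horth
  have hdiff : frobNorm (X - Y) ^ 2 = frobNorm X ^ 2 + frobNorm Y ^ 2 := by
    rw [sub_eq_add_neg, frobNorm_add_sq horth', hnormnegY]
  obtain ⟨h1, h2⟩ := hRIP (X + Y) hrank1
  obtain ⟨h3, h4⟩ := hRIP (X - Y) hrank2
  rw [hsum] at h1 h2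
  rw [hdiff] at h3 h4
  have e1 : ‖A (X + Y)‖ ^ 2 = ‖A X‖ ^ 2 + 2 * (⟪A X, A Y⟫_ℂ).re + ‖A Y‖ ^ 2 := by
    rw [map_add]
    simpa using @norm_add_sq ℂ _ _ _ _ (A X) (A Y)
  have e2 : ‖A (X - Y)‖ ^ 2 = ‖A X‖ ^ 2 - 2 * (⟪A X, A Y⟫_ℂ).re + ‖A Y‖ ^ 2 := by
    rw [map_sub]
    simpa using @norm_sub_sq ℂ _ _ _ _ (A X) (A Y)
  rw [e1] at h1 h2
  rw [e2] at h3 h4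
  rw [abs_le]
  constructor <;> nlinarith [frobNorm_sq X, frobNorm_sq Y, frobInner_self_re_nonneg X,
    frobInner_self_re_nonneg Y]

open FrobAux in
/-- Proposition 1 (generalized restricted orthogonality): if `A` satisfies the
rank-restricted isometry property at rank `r` with constant `δ`, and `X, Y` are
Frobenius-orthogonal with `rank X + rank Y ≤ r`, then
`|⟨A X, A Y⟩| ≤ √2 · δ · ‖X‖_F · ‖Y‖_F`. -/
theorem generalized_restricted_orthogonality_complex
    {m n p r : ℕ}
    (A : Matrix (Fin m) (Fin n) ℂ →ₗ[ℂ] EuclideanSpace ℂ (Fin p))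
    (δ : ℝ) (hδ : 0 ≤ δ)
    (hRIP : ∀ Z : Matrix (Fin m) (Fin n) ℂ, Z.rank ≤ r →
      (1 - δ) * frobNorm Z ^ 2 ≤ ‖A Z‖ ^ 2 ∧ ‖A Z‖ ^ 2 ≤ (1 + δ) * frobNorm Z ^ 2)
    (X Y : Matrix (Fin m) (Fin n) ℂ)
    (horth : frobInner X Y = 0)
    (hrank : X.rank + Y.rank ≤ r) :
    ‖⟪A X, A Y⟫_ℂ‖ ≤ Real.sqrt 2 * δ * frobNorm X * frobNorm Y := by
  set a := frobNorm X with ha_def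
  set b := frobNorm Y with hb_def
  have ha0 : 0 ≤ a := frobNorm_nonneg X
  have hb0 : 0 ≤ b := frobNorm_nonneg Y
  have hRHS : 0 ≤ Real.sqrt 2 * δ * a * b := by positivity
  by_cases hX : X = 0
  · simp [hX, map_zero, inner_zero_left, hRHS]
  by_cases hY : Y = 0
  · simp [hY, map_zero, inner_zero_right, hRHS]
  have ha : 0 < a := ha0.lt_of_ne fun h => hX (frobNorm_eq_zero h.symm)
  have hb : 0 < b := hb0.lt_of_ne fun h => hY (frobNorm_eq_zero h.symm)
  set z := ⟪A X, A Y⟫_ℂ with hz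
  -- real part bound
  have key : ∀ c : ℂ, ‖c‖ = a → frobInner X (c • Y) = 0 →
      |(((b : ℂ)) * c * z).re| ≤ δ * (a * b) ^ 2 := by
    intro c hc hoc
    have horth2 : frobInner ((b : ℂ) • X) (c • Y) = 0 := by
      rw [frobInner_smul_left, hoc, mul_zero]
    have hrank2 : ((b : ℂ) • X).rank + (c • Y).rank ≤ r :=
      le_trans (add_le_add (rank_smul_le _ _) (rank_smul_le _ _)) hrank
    have hb1 : frobNorm ((b : ℂ) • X) = b * a := by
      rw [frobNorm_smul, Complex.norm_real, Real.norm_eq_abs, abs_of_nonneg hb0]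
    have hb2 : frobNorm (c • Y) = a * b := by rw [frobNorm_smul, hc]
    have := re_inner_bound A δ hRIP ((b : ℂ) • X) (c • Y) horth2 hrank2
    rw [hb1, hb2] at this
    have hinner : ⟪A ((b : ℂ) • X), A (c • Y)⟫_ℂ = (b : ℂ) * c * z := by
      rw [A.map_smul, A.map_smul, inner_smul_left, inner_smul_right, Complex.conj_ofReal, mul_assoc]
    rw [hinner] at this
    calc |(((b : ℂ)) * c * z).re| ≤ δ / 2 * ((b * a) ^ 2 + (a * b) ^ 2) := this
      _ = δ * (a * b) ^ 2 := by ring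
  have hre : |z.re| ≤ δ * a * b := by
    have h1 := key (a : ℂ) (by rw [Complex.norm_real, Real.norm_eq_abs, abs_of_nonneg ha0])
      (by rw [frobInner_smul_right, horth, mul_zero])
    have h2 : (((b : ℂ)) * (a : ℂ) * z).re = a * b * z.re := by
      have h3 : ((b : ℂ)) * (a : ℂ) * z = ((a * b : ℝ) : ℂ) * z := by push_cast; ring
      rw [h3, Complex.re_ofReal_mul]
    rw [h2, abs_mul, abs_of_pos (by positivity : (0:ℝ) < a * b)] at h1
    have := (mul_le_mul_iff_right₀ (by positivity : (0:ℝ) < a * b)).mp (by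
      calc a * b * |z.re| ≤ δ * (a * b) ^ 2 := h1
        _ = a * b * (δ * a * b) := by ring)
    linarith
  have him : |z.im| ≤ δ * a * b := by
    have h1 := key ((a : ℂ) * Complex.I)
      (by rw [norm_mul, Complex.norm_real, Real.norm_eq_abs, Complex.norm_I, mul_one, abs_of_nonneg ha0])
      (by rw [frobInner_smul_right, horth, mul_zero])
    have h2 : (((b : ℂ)) * ((a : ℂ) * Complex.I) * z).re = a * b * (-z.im) := by
      have : ((b : ℂ)) * ((a : ℂ) * Complex.I) * z = ((a * b : ℝ) : ℂ) * (Complex.I * z) := by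
        push_cast; ring
      rw [this, Complex.re_ofReal_mul, Complex.I_mul_re]
    rw [h2, abs_mul, abs_neg, abs_of_pos (by positivity : (0:ℝ) < a * b)] at h1
    have := (mul_le_mul_iff_right₀ (by positivity : (0:ℝ) < a * b)).mp (by
      calc a * b * |z.im| ≤ δ * (a * b) ^ 2 := h1
        _ = a * b * (δ * a * b) := by ring)
    linarith
  have hsq : ‖z‖ ^ 2 ≤ 2 * (δ * a * b) ^ 2 := by
    rw [Complex.sq_norm, Complex.normSq_apply]
    nlinarith [abs_nonneg z.re, abs_nonneg z.im, sq_abs z.re, sq_abs z.im]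
  calc ‖z‖ = Real.sqrt (‖z‖ ^ 2) := by
        rw [Real.sqrt_sq (norm_nonneg z)]
    _ ≤ Real.sqrt (2 * (δ * a * b) ^ 2) := Real.sqrt_le_sqrt hsq
    _ = Real.sqrt 2 * (δ * a * b) := by
        rw [Real.sqrt_mul (by norm_num : (0:ℝ) ≤ 2), Real.sqrt_sq (by positivity)]
    _ = Real.sqrt 2 * δ * a * b := by ring
end

section
/- Let A : ℝ^{m×n} → ℝ^p be a linear operator and let δ ≥ 0 be a constant such that (1 − δ)‖X‖_F² ≤ ‖A X‖₂² ≤ (1 + δ)‖X‖_F² for every matrix X ∈ ℝ^{m×n} with rank(X) ≤ r. If X, Y ∈ ℝ^{m×n} satisfy ⟨X, Y⟩ = tr(Yᵀ X) = 0 and rank(X) + rank(Y) ≤ r, then |⟨A X, A Y⟩_{ℝ^p}| ≤ δ · ‖X‖_F · ‖Y‖_F. -/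
open scoped InnerProductSpace
open Matrix

/-- The Frobenius inner product on `ℝ^{m×n}`: `⟨X, Y⟩ = tr(Yᵀ X)`. -/
noncomputable def frobInnerR {m n : ℕ} (X Y : Matrix (Fin m) (Fin n) ℝ) : ℝ :=
  (Yᵀ * X).trace

/-- The Frobenius norm `‖X‖_F = √⟨X, X⟩`. -/
noncomputable def frobNormR {m n : ℕ} (X : Matrix (Fin m) (Fin n) ℝ) : ℝ :=
  Real.sqrt (frobInnerR X X)

lemma frobInner_comm {m n : ℕ} (X Y : Matrix (Fin m) (Fin n) ℝ) :
    frobInnerR X Y = frobInnerR Y X := by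
  unfold frobInnerR
  rw [← Matrix.trace_transpose, Matrix.transpose_mul, Matrix.transpose_transpose]

lemma frobInner_self_nonneg {m n : ℕ} (X : Matrix (Fin m) (Fin n) ℝ) :
    0 ≤ frobInnerR X X := by
  unfold frobInnerR
  rw [Matrix.trace]
  refine Finset.sum_nonneg fun j _ => ?_
  simp only [Matrix.diag_apply, Matrix.mul_apply, Matrix.transpose_apply]
  exact Finset.sum_nonneg fun i _ => mul_self_nonneg _

lemma frobNorm_sq {m n : ℕ} (X : Matrix (Fin m) (Fin n) ℝ) :
    frobNormR X ^ 2 = frobInnerR X X :=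
  Real.sq_sqrt (frobInner_self_nonneg X)

lemma frobInner_expand {m n : ℕ} (c d : ℝ) (X Y : Matrix (Fin m) (Fin n) ℝ) :
    frobInnerR (c • X + d • Y) (c • X + d • Y)
      = c ^ 2 * frobInnerR X X + 2 * c * d * frobInnerR X Y + d ^ 2 * frobInnerR Y Y := by
  have h := frobInner_comm X Y
  unfold frobInnerR at *
  simp only [Matrix.transpose_add, Matrix.transpose_smul, Matrix.add_mul, Matrix.mul_add,
    Matrix.smul_mul, Matrix.mul_smul, Matrix.trace_add, Matrix.trace_smul, smul_eq_mul,
    smul_smul]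
  linear_combination -(c * d) * h

lemma matrix_rank_add_le {m n : ℕ} (X Y : Matrix (Fin m) (Fin n) ℝ) :
    (X + Y).rank ≤ X.rank + Y.rank := by
  unfold Matrix.rank
  rw [Matrix.mulVecLin_add]
  have hle : LinearMap.range (X.mulVecLin + Y.mulVecLin) ≤
      LinearMap.range X.mulVecLin ⊔ LinearMap.range Y.mulVecLin := by
    rintro v ⟨w, rfl⟩
    exact Submodule.add_mem_sup ⟨w, rfl⟩ ⟨w, rfl⟩
  exact le_trans (Submodule.finrank_mono hle)
    (Submodule.finrank_add_le_finrank_add_finrank _ _)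

lemma matrix_rank_smul_le {m n : ℕ} (c : ℝ) (X : Matrix (Fin m) (Fin n) ℝ) :
    (c • X).rank ≤ X.rank := by
  unfold Matrix.rank
  refine Submodule.finrank_mono ?_
  rintro v ⟨w, rfl⟩
  exact ⟨c • w, by simp [Matrix.mulVecLin_apply, Matrix.mulVec_smul,
    Matrix.smul_mulVec]⟩

/-- Real-field improvement of Proposition 1: if `A : ℝ^{m×n} → ℝ^p` satisfies the
rank-restricted isometry property at rank `r` with constant `δ`, and `X, Y` are
Frobenius-orthogonal with `rank X + rank Y ≤ r`, then
`|⟨A X, A Y⟩| ≤ δ · ‖X‖_F · ‖Y‖_F`. -/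
theorem generalized_restricted_orthogonality_real
    {m n p r : ℕ}
    (A : Matrix (Fin m) (Fin n) ℝ →ₗ[ℝ] EuclideanSpace ℝ (Fin p))
    (δ : ℝ) (hδ : 0 ≤ δ)
    (hRIP : ∀ Z : Matrix (Fin m) (Fin n) ℝ, Z.rank ≤ r →
      (1 - δ) * frobNormR Z ^ 2 ≤ ‖A Z‖ ^ 2 ∧ ‖A Z‖ ^ 2 ≤ (1 + δ) * frobNormR Z ^ 2)
    (X Y : Matrix (Fin m) (Fin n) ℝ)
    (horth : frobInnerR X Y = 0)
    (hrank : X.rank + Y.rank ≤ r) :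
    |⟪A X, A Y⟫_ℝ| ≤ δ * frobNormR X * frobNormR Y := by
  set a := frobNormR X with ha
  set b := frobNormR Y with hb
  have ha0 : 0 ≤ a := Real.sqrt_nonneg _
  have hb0 : 0 ≤ b := Real.sqrt_nonneg _
  have haX : a ^ 2 = frobInnerR X X := frobNorm_sq X
  have hbY : b ^ 2 = frobInnerR Y Y := frobNorm_sq Y
  have hrX : X.rank ≤ r := le_trans (Nat.le_add_right _ _) hrank
  have hrY : Y.rank ≤ r := le_trans (Nat.le_add_left _ _) hrank
  -- degenerate cases
  by_cases hA : a = 0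
  · have h1 := (hRIP X hrX).2
    rw [← ha, hA] at h1
    have : ‖A X‖ ^ 2 ≤ 0 := by nlinarith
    have hAX : A X = 0 := by
      have := norm_nonneg (A X)
      have hn : ‖A X‖ = 0 := by nlinarith
      exact norm_eq_zero.mp hn
    simp [hAX, hA]
  by_cases hB : b = 0
  · have h1 := (hRIP Y hrY).2
    rw [← hb, hB] at h1
    have hAY : A Y = 0 := by
      have := norm_nonneg (A Y)
      have hn : ‖A Y‖ = 0 := by nlinarith
      exact norm_eq_zero.mp hn
    simp [hAY, hB]
  have ha' : 0 < a := lt_of_le_of_ne ha0 (Ne.symm hA)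
  have hb' : 0 < b := lt_of_le_of_ne hb0 (Ne.symm hB)
  -- the two combinations
  have hrankP : ∀ c d : ℝ, (c • X + d • Y).rank ≤ r :=
    fun c d => le_trans (le_trans (matrix_rank_add_le _ _)
      (add_le_add (matrix_rank_smul_le _ _) (matrix_rank_smul_le _ _))) hrank
  have normPQ : ∀ c d : ℝ, frobNormR (c • X + d • Y) ^ 2
      = c ^ 2 * a ^ 2 + d ^ 2 * b ^ 2 := by
    intro c d
    rw [frobNorm_sq, frobInner_expand, horth, haX, hbY]; ring
  have innerPQ : ∀ c d : ℝ, ‖A (c • X + d • Y)‖ ^ 2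
      = c ^ 2 * ‖A X‖ ^ 2 + 2 * c * d * ⟪A X, A Y⟫_ℝ + d ^ 2 * ‖A Y‖ ^ 2 := by
    intro c d
    simp only [map_add, _root_.map_smul]
    rw [← real_inner_self_eq_norm_sq, ← real_inner_self_eq_norm_sq,
      ← real_inner_self_eq_norm_sq, inner_add_add_self]
    simp only [real_inner_smul_left, real_inner_smul_right]
    rw [real_inner_comm (A Y) (A X)]
    ring
  have hP := (hRIP (b • X + a • Y) (hrankP b a)).2
  have hQ := (hRIP (b • X + (-a) • Y) (hrankP b (-a))).1
  have hP' := (hRIP (b • X + a • Y) (hrankP b a)).1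
  have hQ' := (hRIP (b • X + (-a) • Y) (hrankP b (-a))).2
  rw [normPQ, innerPQ] at hP hQ hP' hQ'
  have hab : 0 < a * b := mul_pos ha' hb'
  have key1 : ⟪A X, A Y⟫_ℝ ≤ δ * a * b := by nlinarith [hP, hQ, hab]
  have key2 : -(δ * a * b) ≤ ⟪A X, A Y⟫_ℝ := by nlinarith [hP', hQ', hab]
  rw [abs_le]
  constructor <;> linarith
end
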